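/- Let F ∈ K[x] be a separable polynomial over a function field K with roots a₁, ..., a_m in an algebraic closure, m ≥ 1. Suppose that for all triples of distinct indices i, j, k, the ratio (a_i - a_j)/(a_i - a_k) lies in the algebraic closure of F_q. Then there exist α ≠ 0, β algebraic over K, an integer ν ≥ 1, and elements b₁, ..., b_m ∈ F_{q^ν} such that a_i = α·b_i + β for all i. -/

import Mathlib

open Polynomial

private lemma pow_pow_of_dvd {Ω : Type*} [Monoid Ω] (x : Ω) (s n M : ℕ)
    (h : x ^ s ^ n = x) (hd : n ∣ M) : x ^ s ^ M = x := by
  obtain ⟨k, rfl⟩ := hd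
  induction k with
  | zero => simp
  | succ k ih =>
    rw [Nat.mul_succ, pow_add, pow_mul, ih]
    exact h

private lemma exists_pow_pow_eq {Ω : Type*} [Field Ω] (p : ℕ) [Fact p.Prime] [CharP Ω p]
    [Algebra (ZMod p) Ω] (x : Ω) (hx : IsAlgebraic (ZMod p) x) :
    ∃ n, 1 ≤ n ∧ x ^ p ^ n = x := by
  let L := IntermediateField.adjoin (ZMod p) {x}
  haveI : FiniteDimensional (ZMod p) L :=
    IntermediateField.adjoin.finiteDimensional hx.isIntegral
  haveI : Finite L := Module.finite_of_finite (ZMod p)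
  haveI : Fintype L := Fintype.ofFinite L
  refine ⟨Module.finrank (ZMod p) L, Module.finrank_pos, ?_⟩
  have hcardL : Fintype.card L = p ^ Module.finrank (ZMod p) L := by
    rw [Module.card_eq_pow_finrank (K := ZMod p), ZMod.card]
  set y : L := ⟨x, IntermediateField.mem_adjoin_simple_self _ _⟩ with hy
  have := FiniteField.pow_card y
  rw [hcardL] at this
  have := congrArg (Subtype.val) this
  push_cast at this
  simpa [hy] using this

/-- Let `K` be a field of characteristic `p` containing `F_q`, and `F ∈ K[x]` a separable
polynomial with (distinct) roots `a₁, …, a_m` (`m ≥ 1`) in an algebraic closure of `K`.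
If for all triples of distinct indices `i, j, k` the ratio `(a_i - a_j)/(a_i - a_k)` is
algebraic over the prime field (i.e. lies in the algebraic closure of `F_q`), then there
exist `α ≠ 0`, `β` (algebraic over `K`, being elements of the algebraic closure), `ν ≥ 1`,
and elements `b₁, …, b_m` of the subfield `F_{q^ν}` (characterized by `b^{q^ν} = b`) with
`a_i = α·b_i + β` for all `i`. -/
theorem stmt_7 (Fq K : Type*) [Field Fq] [Fintype Fq] [Field K] [Algebra Fq K]
    (p : ℕ) [Fact p.Prime] [CharP K p] [Algebra (ZMod p) (AlgebraicClosure K)]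
    (q e : ℕ) (hcard : Fintype.card Fq = q) (hq : q = p ^ e) (he : 1 ≤ e)
    (F : K[X]) (hFsep : F.Separable)
    (m : ℕ) (hm : 1 ≤ m) (a : Fin m → AlgebraicClosure K) (ha : Function.Injective a)
    (hroots : F.map (algebraMap K (AlgebraicClosure K)) =
      C (algebraMap K (AlgebraicClosure K) F.leadingCoeff) *
        ∏ i : Fin m, (X - C (a i)))
    (hratio : ∀ i j k : Fin m, i ≠ j → i ≠ k → j ≠ k →
      IsAlgebraic (ZMod p) ((a i - a j) / (a i - a k))) :
    ∃ (α β : AlgebraicClosure K), α ≠ 0 ∧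
      ∃ ν : ℕ, 1 ≤ ν ∧ ∃ b : Fin m → AlgebraicClosure K,
        (∀ i, b i ^ q ^ ν = b i) ∧ ∀ i, a i = α * b i + β := by
  have hp : 2 ≤ p := (Fact.out : p.Prime).two_le
  have hq2 : 2 ≤ q := by
    have h1 : p ≤ p ^ e := by
      calc p = p ^ 1 := (pow_one p).symm
      _ ≤ p ^ e := Nat.pow_le_pow_right (by omega) he
    omega
  by_cases hm2 : 2 ≤ m
  · -- main case
    have h01 : (⟨0, by omega⟩ : Fin m) ≠ ⟨1, by omega⟩ := by
      simp [Fin.ext_iff]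
    set i0 : Fin m := ⟨0, by omega⟩
    set i1 : Fin m := ⟨1, by omega⟩
    have hα : a i1 - a i0 ≠ 0 := sub_ne_zero.2 fun h => h01 (ha h.symm)
    set b : Fin m → AlgebraicClosure K := fun i => (a i - a i0) / (a i1 - a i0) with hb
    have halg : ∀ i, IsAlgebraic (ZMod p) (b i) := by
      intro i
      by_cases h0 : i = i0
      · subst h0; simpa [hb] using isAlgebraic_zero
      by_cases h1 : i = i1
      · subst h1; simpa [hb, div_self hα] using isAlgebraic_one
      have hi0 : a i - a i0 ≠ 0 := sub_ne_zero.2 fun h => h0 (ha h)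
      have hi1 : a i - a i1 ≠ 0 := sub_ne_zero.2 fun h => h1 (ha h)
      have hr := hratio i i0 i1 h0 h1 h01
      set r := (a i - a i0) / (a i - a i1) with hrdef
      have hr1 : r - 1 = (a i1 - a i0) / (a i - a i1) := by
        field_simp [hrdef]
        rw [hrdef, sub_mul, div_mul_cancel₀ _ hi1]; ring
      have hrne : r - 1 ≠ 0 := by
        rw [hr1]; exact div_ne_zero hα hi1
      have : b i = r / (r - 1) := by
        rw [hr1, hrdef, hb]
        field_simp
      rw [this]
      rw [← mem_algebraicClosure_iff] at hr ⊢
      exact div_mem hr (sub_mem hr (one_mem _))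
    choose n hn1 hnpow using fun i => exists_pow_pow_eq p (b i) (halg i)
    refine ⟨a i1 - a i0, a i0, hα, ∏ i, n i, Finset.one_le_prod' fun i _ => hn1 i, b, ?_, ?_⟩
    · intro i
      rw [hq, ← pow_mul]
      exact pow_pow_of_dvd _ p (n i) _ (hnpow i)
        (Dvd.dvd.mul_left (Finset.dvd_prod_of_mem n (Finset.mem_univ i)) e)
    · intro i
      rw [hb]
      field_simp
      ring
  · -- m = 1
    have hm1 : m = 1 := by omega
    subst hm1
    refine ⟨1, a 0, one_ne_zero, 1, le_refl 1, 0, ?_, ?_⟩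
    · intro i
      simp only [Pi.zero_apply]
      exact zero_pow (by positivity)
    · intro i
      have : i = 0 := Subsingleton.elim _ _
      subst this
      simp
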